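/- Any solution of the Hamilton–Cartan system (i) q̇¹ = v¹, (ii) q̇² = v², (iii) v̇¹ = β(q¹−q²) − αv², (iv) αv¹ = β(q¹−q²) satisfies the secondary constraint (α² − β)(v¹ − v²) = 0, equivalently (α² − β)(αv² − β(q¹−q²)) = 0. (This is the secondary constraint produced by the Cartan algorithm in the Sundermeyer example.) -/

import Mathlib

/-- Any solution of the Hamilton–Cartan system
(i) `q̇¹ = v¹`, (ii) `q̇² = v²`, (iii) `v̇¹ = β(q¹−q²) − αv²`,
(iv) `αv¹ = β(q¹−q²)` satisfies the secondary constraint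
`(α² − β)(v¹ − v²) = 0`, equivalently `(α² − β)(αv² − β(q¹−q²)) = 0`. -/
theorem stmt7 (α β : ℝ) (q1 q2 v1 v2 : ℝ → ℝ)
    (hq1 : Differentiable ℝ q1) (hq2 : Differentiable ℝ q2)
    (hv1 : Differentiable ℝ v1) (hv2 : Differentiable ℝ v2)
    (h1 : ∀ t, deriv q1 t = v1 t)
    (h2 : ∀ t, deriv q2 t = v2 t)
    (h3 : ∀ t, deriv v1 t = β * (q1 t - q2 t) - α * v2 t)
    (h4 : ∀ t, α * v1 t = β * (q1 t - q2 t)) :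
    (∀ t, (α ^ 2 - β) * (v1 t - v2 t) = 0) ∧
      (∀ t, (α ^ 2 - β) * (α * v2 t - β * (q1 t - q2 t)) = 0) := by
  have key : ∀ t, (α ^ 2 - β) * (v1 t - v2 t) = 0 := by
    intro t
    have hfun : (fun t => α * v1 t) = fun t => β * (q1 t - q2 t) := funext h4
    have hd : deriv (fun t => α * v1 t) t = deriv (fun t => β * (q1 t - q2 t)) t := by
      rw [hfun]
    rw [deriv_const_mul _ (hv1 t), deriv_const_mul _ (show DifferentiableAt ℝ (fun t => q1 t - q2 t) t from (hq1 t).sub (hq2 t)),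
      deriv_fun_sub (hq1 t) (hq2 t), h1, h2, h3] at hd
    have h4t := h4 t
    linear_combination α * h4t + hd
  refine ⟨key, fun t => ?_⟩
  have := key t
  have h4t := h4 t
  linear_combination (-α) * this + (α ^ 2 - β) * h4t
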